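/- The Cartesian product Σ₁ × Σ₂ of two connected signed graphs is compatible if and only if both Σ₁ and Σ₂ are compatible. -/

import Mathlib

open SimpleGraph

/-- The sign of a walk: the product of the signs of its edges. -/
def walkSign {V : Type*} {G : SimpleGraph V} (σ : V → V → ℤ) :
    {u v : V} → G.Walk u v → ℤ
  | _, _, SimpleGraph.Walk.nil => 1
  | _, _, @SimpleGraph.Walk.cons _ _ a b _ _ p => σ a b * walkSign σ p

/-- A walk is a shortest path if its length equals the distance of its endpoints. -/
def IsShortest {V : Type*} {G : SimpleGraph V} {u v : V} (p : G.Walk u v) : Prop :=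
  p.length = G.dist u v

/-- A signed graph is compatible if all shortest paths between any two vertices have
the same sign. -/
def Compatible {V : Type*} (G : SimpleGraph V) (σ : V → V → ℤ) : Prop :=
  ∀ (u v : V) (p q : G.Walk u v), IsShortest p → IsShortest q →
    walkSign σ p = walkSign σ q

/-- The signature of the Cartesian product of signed graphs: an edge inherits the sign
from the coordinate in which the move occurs. -/
def boxSign {V₁ V₂ : Type*} (σ₁ : V₁ → V₁ → ℤ) (σ₂ : V₂ → V₂ → ℤ)
    [DecidableEq V₁] [DecidableEq V₂] : V₁ × V₂ → V₁ × V₂ → ℤ :=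
  fun x y => if x.2 = y.2 then σ₁ x.1 y.1 else σ₂ x.2 y.2

section Aux

variable {V₁ V₂ : Type*} [DecidableEq V₁] [DecidableEq V₂]
  {G₁ : SimpleGraph V₁} {G₂ : SimpleGraph V₂}

@[simp] lemma walkSign_nil {V : Type*} {G : SimpleGraph V} (σ : V → V → ℤ) (u : V) :
    walkSign σ (SimpleGraph.Walk.nil : G.Walk u u) = 1 := rfl

@[simp] lemma walkSign_cons {V : Type*} {G : SimpleGraph V} (σ : V → V → ℤ) {a b c : V}
    (h : G.Adj a b) (p : G.Walk b c) :
    walkSign σ (SimpleGraph.Walk.cons h p) = σ a b * walkSign σ p := rfl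

lemma walkSign_append {V : Type*} {G : SimpleGraph V} (σ : V → V → ℤ) {a b c : V}
    (p : G.Walk a b) (q : G.Walk b c) :
    walkSign σ (p.append q) = walkSign σ p * walkSign σ q := by
  induction p with
  | nil => simp
  | cons h p ih => simp [ih, mul_assoc]

lemma walkSign_boxProdLeft (σ₁ : V₁ → V₁ → ℤ) (σ₂ : V₂ → V₂ → ℤ) (b : V₂)
    {u v : V₁} (p : G₁.Walk u v) :
    walkSign (boxSign σ₁ σ₂) (p.boxProdLeft (H := G₂) b) = walkSign σ₁ p := by
  induction p with
  | nil => rfl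
  | cons h p ih =>
    show boxSign σ₁ σ₂ (_, b) (_, b) * walkSign (boxSign σ₁ σ₂) (p.boxProdLeft (H := G₂) b) =
      σ₁ _ _ * walkSign σ₁ p
    simp [ih, boxSign]

lemma walkSign_boxProdRight (σ₁ : V₁ → V₁ → ℤ) (σ₂ : V₂ → V₂ → ℤ) (a : V₁)
    {u v : V₂} (p : G₂.Walk u v) :
    walkSign (boxSign σ₁ σ₂) (p.boxProdRight (G := G₁) a) = walkSign σ₂ p := by
  induction p with
  | nil => rfl
  | cons h p ih =>
    show boxSign σ₁ σ₂ (a, _) (a, _) * walkSign (boxSign σ₁ σ₂) (p.boxProdRight (G := G₁) a) =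
      σ₂ _ _ * walkSign σ₂ p
    rw [ih, boxSign]
    simp [h.ne]

lemma length_boxProdLeft' (b : V₂) {u v : V₁} (p : G₁.Walk u v) :
    (p.boxProdLeft (H := G₂) b).length = p.length := SimpleGraph.Walk.length_map _ _

lemma length_boxProdRight' (a : V₁) {u v : V₂} (p : G₂.Walk u v) :
    (p.boxProdRight (G := G₁) a).length = p.length := SimpleGraph.Walk.length_map _ _

lemma boxProd_walk_length_ge (h₁ : G₁.Connected) (h₂ : G₂.Connected)
    {x y : V₁ × V₂} (w : (G₁ □ G₂).Walk x y) :
    G₁.dist x.1 y.1 + G₂.dist x.2 y.2 ≤ w.length := by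
  induction w with
  | nil => simp
  | @cons x z y h p ih =>
    rcases (SimpleGraph.boxProd_adj.mp h) with ⟨ha, hb⟩ | ⟨hb, ha⟩
    · have t1 : G₁.dist x.1 y.1 ≤ G₁.dist x.1 z.1 + G₁.dist z.1 y.1 :=
        h₁.dist_triangle
      have t2 : G₁.dist x.1 z.1 ≤ 1 := by
        simpa using SimpleGraph.dist_le ha.toWalk
      have hb' : G₂.dist x.2 y.2 = G₂.dist z.2 y.2 := by rw [hb]
      simp only [SimpleGraph.Walk.length_cons]
      omega
    · have t1 : G₂.dist x.2 y.2 ≤ G₂.dist x.2 z.2 + G₂.dist z.2 y.2 :=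
        h₂.dist_triangle
      have t2 : G₂.dist x.2 z.2 ≤ 1 := by
        simpa using SimpleGraph.dist_le hb.toWalk
      have hb' : G₁.dist x.1 y.1 = G₁.dist z.1 y.1 := by rw [ha]
      simp only [SimpleGraph.Walk.length_cons]
      omega

lemma boxProd_dist (h₁ : G₁.Connected) (h₂ : G₂.Connected) (x y : V₁ × V₂) :
    (G₁ □ G₂).dist x y = G₁.dist x.1 y.1 + G₂.dist x.2 y.2 := by
  refine le_antisymm ?_ ?_
  · obtain ⟨p, hp⟩ := (h₁ x.1 y.1).exists_walk_length_eq_dist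
    obtain ⟨q, hq⟩ := (h₂ x.2 y.2).exists_walk_length_eq_dist
    have := SimpleGraph.dist_le (((p.boxProdLeft (H := G₂) x.2).append
      (q.boxProdRight (G := G₁) y.1)).copy Prod.mk.eta Prod.mk.eta)
    simpa [length_boxProdLeft', length_boxProdRight',
      SimpleGraph.Walk.length_map, hp, hq] using this
  · obtain ⟨w, hw⟩ := ((h₁.boxProd h₂) x y).exists_walk_length_eq_dist
    rw [← hw]
    exact boxProd_walk_length_ge h₁ h₂ w

end Aux

noncomputable def spSign {V : Type*} (G : SimpleGraph V) (σ : V → V → ℤ) (h : G.Connected)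
    (u v : V) : ℤ :=
  walkSign σ ((h u v).exists_walk_length_eq_dist.choose)

lemma spSign_eq {V : Type*} {G : SimpleGraph V} (σ : V → V → ℤ) (h : G.Connected)
    (hc : Compatible G σ) {u v : V} (p : G.Walk u v) (hp : IsShortest p) :
    walkSign σ p = spSign G σ h u v :=
  hc u v p _ hp (h u v).exists_walk_length_eq_dist.choose_spec

lemma spSign_self {V : Type*} {G : SimpleGraph V} (σ : V → V → ℤ) (h : G.Connected)
    (hc : Compatible G σ) (u : V) : spSign G σ h u u = 1 := by
  rw [← spSign_eq σ h hc (SimpleGraph.Walk.nil : G.Walk u u) (by simp [IsShortest, SimpleGraph.dist_self])]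
  rfl

lemma spSign_step {V : Type*} {G : SimpleGraph V} (σ : V → V → ℤ) (h : G.Connected)
    (hc : Compatible G σ) {u w v : V} (hAdj : G.Adj u w)
    (hd : G.dist u v = G.dist w v + 1) :
    spSign G σ h u v = σ u w * spSign G σ h w v := by
  obtain ⟨q, hq⟩ := (h w v).exists_walk_length_eq_dist
  have hcons : IsShortest (SimpleGraph.Walk.cons hAdj q) := by
    simp [IsShortest, hq, hd]
  rw [← spSign_eq σ h hc _ hcons, walkSign_cons, spSign_eq σ h hc q hq]

section Main

variable {V₁ V₂ : Type*} [DecidableEq V₁] [DecidableEq V₂]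
  {G₁ : SimpleGraph V₁} {G₂ : SimpleGraph V₂}

lemma boxProd_shortest_sign (h₁ : G₁.Connected) (h₂ : G₂.Connected)
    {σ₁ : V₁ → V₁ → ℤ} {σ₂ : V₂ → V₂ → ℤ}
    (hc₁ : Compatible G₁ σ₁) (hc₂ : Compatible G₂ σ₂)
    {x y : V₁ × V₂} (p : (G₁ □ G₂).Walk x y) (hp : IsShortest p) :
    walkSign (boxSign σ₁ σ₂) p = spSign G₁ σ₁ h₁ x.1 y.1 * spSign G₂ σ₂ h₂ x.2 y.2 := by
  induction p with
  | nil => simp [spSign_self σ₁ h₁ hc₁, spSign_self σ₂ h₂ hc₂]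
  | @cons x z y h p ih =>
    have hlen : (SimpleGraph.Walk.cons h p).length = (G₁ □ G₂).dist x y := hp
    rw [boxProd_dist h₁ h₂, SimpleGraph.Walk.length_cons] at hlen
    have hge := boxProd_walk_length_ge h₁ h₂ p
    rcases (SimpleGraph.boxProd_adj.mp h) with ⟨ha, hb⟩ | ⟨hb, ha⟩
    · have t1 : G₁.dist x.1 y.1 ≤ G₁.dist x.1 z.1 + G₁.dist z.1 y.1 := h₁.dist_triangle
      have t2 : G₁.dist x.1 z.1 ≤ 1 := by simpa using SimpleGraph.dist_le ha.toWalk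
      have hb2 : G₂.dist x.2 y.2 = G₂.dist z.2 y.2 := by rw [hb]
      have hshort : IsShortest p := by
        unfold IsShortest; rw [boxProd_dist h₁ h₂]; omega
      have hd : G₁.dist x.1 y.1 = G₁.dist z.1 y.1 + 1 := by omega
      rw [walkSign_cons, ih hshort, spSign_step σ₁ h₁ hc₁ ha hd]
      have hbs : boxSign σ₁ σ₂ x z = σ₁ x.1 z.1 := by simp [boxSign, hb]
      rw [hbs, hb]
      ring
    · have t1 : G₂.dist x.2 y.2 ≤ G₂.dist x.2 z.2 + G₂.dist z.2 y.2 := h₂.dist_triangle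
      have t2 : G₂.dist x.2 z.2 ≤ 1 := by simpa using SimpleGraph.dist_le hb.toWalk
      have hb2 : G₁.dist x.1 y.1 = G₁.dist z.1 y.1 := by rw [ha]
      have hshort : IsShortest p := by
        unfold IsShortest; rw [boxProd_dist h₁ h₂]; omega
      have hd : G₂.dist x.2 y.2 = G₂.dist z.2 y.2 + 1 := by omega
      rw [walkSign_cons, ih hshort, spSign_step σ₂ h₂ hc₂ hb hd]
      have hbs : boxSign σ₁ σ₂ x z = σ₂ x.2 z.2 := by simp [boxSign, hb.ne]
      rw [hbs, ha]
      ring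

end Main

/-- The Cartesian product of two connected signed graphs is compatible if and only if
both factors are compatible. -/
theorem boxProd_compatible_iff {V₁ V₂ : Type*} [DecidableEq V₁] [DecidableEq V₂]
    (G₁ : SimpleGraph V₁) (G₂ : SimpleGraph V₂)
    (h₁ : G₁.Connected) (h₂ : G₂.Connected)
    (σ₁ : V₁ → V₁ → ℤ) (σ₂ : V₂ → V₂ → ℤ)
    (hσ₁ : ∀ u v : V₁, G₁.Adj u v → σ₁ u v = 1 ∨ σ₁ u v = -1)
    (hσ₂ : ∀ u v : V₂, G₂.Adj u v → σ₂ u v = 1 ∨ σ₂ u v = -1)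
    (hsymm₁ : ∀ u v : V₁, σ₁ u v = σ₁ v u) (hsymm₂ : ∀ u v : V₂, σ₂ u v = σ₂ v u) :
    Compatible (G₁ □ G₂) (boxSign σ₁ σ₂) ↔ Compatible G₁ σ₁ ∧ Compatible G₂ σ₂ := by
  constructor
  · intro hc
    constructor
    · intro u v p q hp hq
      obtain ⟨b⟩ := h₂.nonempty
      have hdist : (G₁ □ G₂).dist (u, b) (v, b) = G₁.dist u v := by
        rw [boxProd_dist h₁ h₂]; simp [SimpleGraph.dist_self]
      have hP : IsShortest (p.boxProdLeft (H := G₂) b) := by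
        simp [IsShortest, length_boxProdLeft', SimpleGraph.Walk.length_map,
          hdist]; exact hp
      have hQ : IsShortest (q.boxProdLeft (H := G₂) b) := by
        simp [IsShortest, length_boxProdLeft', SimpleGraph.Walk.length_map,
          hdist]; exact hq
      have := hc _ _ _ _ hP hQ
      rwa [walkSign_boxProdLeft, walkSign_boxProdLeft] at this
    · intro u v p q hp hq
      obtain ⟨a⟩ := h₁.nonempty
      have hdist : (G₁ □ G₂).dist (a, u) (a, v) = G₂.dist u v := by
        rw [boxProd_dist h₁ h₂]; simp [SimpleGraph.dist_self]
      have hP : IsShortest (p.boxProdRight (G := G₁) a) := by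
        simp [IsShortest, length_boxProdRight', SimpleGraph.Walk.length_map,
          hdist]; exact hp
      have hQ : IsShortest (q.boxProdRight (G := G₁) a) := by
        simp [IsShortest, length_boxProdRight', SimpleGraph.Walk.length_map,
          hdist]; exact hq
      have := hc _ _ _ _ hP hQ
      rwa [walkSign_boxProdRight, walkSign_boxProdRight] at this
  · rintro ⟨hc₁, hc₂⟩ x y p q hp hq
    rw [boxProd_shortest_sign h₁ h₂ hc₁ hc₂ p hp,
      boxProd_shortest_sign h₁ h₂ hc₁ hc₂ q hq]
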